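/- arXiv:1911.02764 — 2 statements merged into one kernel-verified Lean document; each statement's English description precedes it below -/
import Mathlib

section
/- Let p, B, k be positive integers with B dividing p, let ε > 0 and suppose B ≥ k^(1+ε). Let the p items be partitioned uniformly at random into B equal bins, let S ⊆ Fin p be a fixed set of k items, and let N_col be the number of items i ∈ S sharing a bin with at least one other item of S. Then for every α > 0, the probability that N_col ≥ (α/3)·k is at most (3/α)·k^(−ε). -/
open scoped ENNReal
open Finset


lemma exists_perm_pair {β : Type*} [DecidableEq β] {a b a' b' : β}
    (hab : a ≠ b) (hab' : a' ≠ b') :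
    ∃ τ : Equiv.Perm β, τ a = a' ∧ τ b = b' := by
  classical
  have h1 : (Equiv.swap a a') a = a' := Equiv.swap_apply_left a a'
  set b'' := (Equiv.swap a a') b with hb''
  have hne : b'' ≠ a' := by
    intro h
    exact hab ((Equiv.swap a a').injective (h.trans h1.symm)).symm
  refine ⟨(Equiv.swap a a').trans (Equiv.swap b'' b'), ?_, ?_⟩
  · simp only [Equiv.trans_apply, h1]
    exact Equiv.swap_apply_of_ne_of_ne (Ne.symm hne) hab'
  · simp only [Equiv.trans_apply, ← hb'']
    exact Equiv.swap_apply_left b'' b'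

lemma bin_card {p m B : ℕ} (hm : 0 < m) (hpm : p = B * m) (a : Fin p) :
    (univ.filter fun b : Fin p => (b : ℕ) / m = (a : ℕ) / m).card = m := by
  set q := (a : ℕ) / m with hq
  have hqB : q < B := (Nat.div_lt_iff_lt_mul hm).mpr (by rw [← hpm]; exact a.isLt)
  have h1 : (univ.filter fun b : Fin p => (b : ℕ) / m = q).card
      = ((Finset.range p).filter fun x => x / m = q).card := by
    rw [Finset.card_filter, Finset.card_filter]
    exact Fin.sum_univ_eq_sum_range (fun x => if x / m = q then 1 else 0) p
  rw [h1]
  have h2 : (Finset.range p).filter (fun x => x / m = q) = Finset.Ico (q*m) (q*m+m) := by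
    ext x
    simp only [mem_filter, mem_range, mem_Ico]
    constructor
    · rintro ⟨hx, hxq⟩
      have hd := Nat.div_add_mod x m
      have hmlt := Nat.mod_lt x hm
      rw [hxq] at hd
      have hcomm : m * q = q * m := Nat.mul_comm m q
      omega
    · rintro ⟨hlo, hhi⟩
      have hxp : x < p := by
        have h3 : (q+1)*m ≤ B * m := Nat.mul_le_mul_right m hqB
        have : (q+1)*m = q*m+m := by ring
        omega
      refine ⟨hxp, Nat.div_eq_of_lt_le hlo ?_⟩
      have : (q+1)*m = q*m+m := by ring
      omega
  rw [h2, Nat.card_Ico]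
  omega

lemma fib_card_eq {n : ℕ} {i j : Fin n} (hij : i ≠ j) {a b a' b' : Fin n}
    (hab : a ≠ b) (hab' : a' ≠ b') :
    (univ.filter fun σ : Equiv.Perm (Fin n) => σ i = a ∧ σ j = b).card
      = (univ.filter fun σ : Equiv.Perm (Fin n) => σ i = a' ∧ σ j = b').card := by
  classical
  obtain ⟨τ, hτa, hτb⟩ := exists_perm_pair hab hab'
  apply Finset.card_bij' (fun σ _ => τ * σ) (fun σ _ => τ⁻¹ * σ)
  · intro σ hσ
    obtain ⟨-, h1, h2⟩ := Finset.mem_filter.mp hσ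
    refine Finset.mem_filter.mpr ⟨Finset.mem_univ _, ?_, ?_⟩
    · simp [Equiv.Perm.mul_apply, h1, hτa]
    · simp [Equiv.Perm.mul_apply, h2, hτb]
  · intro σ hσ
    obtain ⟨-, h1, h2⟩ := Finset.mem_filter.mp hσ
    refine Finset.mem_filter.mpr ⟨Finset.mem_univ _, ?_, ?_⟩
    · simp [Equiv.Perm.mul_apply, h1, ← hτa]
    · simp [Equiv.Perm.mul_apply, h2, ← hτb]
  · intro σ _; simp [mul_assoc]
  · intro σ _; simp [mul_assoc]

lemma count_mul_B_le {p B m : ℕ} (hm : 0 < m) (hB : 0 < B) (hpm : p = B * m)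
    {i j : Fin p} (hij : j ≠ i) :
    (univ.filter fun σ : Equiv.Perm (Fin p) =>
        (σ j : ℕ) / m = (σ i : ℕ) / m).card * B
      ≤ Fintype.card (Equiv.Perm (Fin p)) := by
  classical
  -- fiber count (reference value)
  set F := (univ.filter fun σ : Equiv.Perm (Fin p) => σ i = i ∧ σ j = j).card with hF
  have hij' : i ≠ j := hij.symm
  -- the map σ ↦ (σ i, σ j)
  set g : Equiv.Perm (Fin p) → Fin p × Fin p := fun σ => (σ i, σ j) with hg
  have fib_eq : ∀ ab : Fin p × Fin p, ab.1 ≠ ab.2 →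
      (univ.filter fun σ : Equiv.Perm (Fin p) => g σ = ab).card = F := by
    intro ab hne
    have : (univ.filter fun σ : Equiv.Perm (Fin p) => g σ = ab)
        = (univ.filter fun σ : Equiv.Perm (Fin p) => σ i = ab.1 ∧ σ j = ab.2) := by
      apply Finset.filter_congr; intro σ _
      simp [hg, Prod.ext_iff]
    rw [this]
    exact fib_card_eq hij' hne hij'
  have fib_diag : ∀ ab : Fin p × Fin p, ab.1 = ab.2 →
      (univ.filter fun σ : Equiv.Perm (Fin p) => g σ = ab).card = 0 := by
    intro ab heq
    rw [Finset.card_eq_zero, Finset.filter_eq_empty_iff]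
    intro σ _
    intro h
    apply hij'
    apply σ.injective
    have h1 : σ i = ab.1 := by rw [← h]
    have h2 : σ j = ab.2 := by rw [← h]
    rw [h1, h2, heq]
  -- number of same-bin off-diagonal pairs
  set t₁ := (univ ×ˢ univ : Finset (Fin p × Fin p)).filter
      (fun ab => ab.1 ≠ ab.2 ∧ (ab.2 : ℕ) / m = (ab.1 : ℕ) / m) with ht₁
  have ht₁card : t₁.card = p * (m - 1) := by
    rw [ht₁, Finset.card_filter, Finset.sum_product]
    have : ∀ a : Fin p,
        (∑ b : Fin p, if a ≠ b ∧ (b : ℕ) / m = (a : ℕ) / m then 1 else 0) = m - 1 := by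
      intro a
      rw [← Finset.card_filter]
      have : (univ.filter fun b : Fin p => a ≠ b ∧ (b : ℕ) / m = (a : ℕ) / m)
          = (univ.filter fun b : Fin p => (b : ℕ) / m = (a : ℕ) / m).erase a := by
        ext b
        simp only [Finset.mem_erase, Finset.mem_filter, Finset.mem_univ, true_and]
        tauto
      rw [this, Finset.card_erase_of_mem, bin_card hm hpm a]
      simp
    simp only [this, Finset.sum_const, Finset.card_univ, Fintype.card_fin, smul_eq_mul]
  -- count as sum over fibers
  have hcount : (univ.filter fun σ : Equiv.Perm (Fin p) =>
      (σ j : ℕ) / m = (σ i : ℕ) / m).card = t₁.card * F := by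
    rw [Finset.card_eq_sum_card_fiberwise (f := g) (t := t₁)
      (fun σ hσ => by
        simp only [Finset.coe_filter, Finset.mem_coe, Finset.mem_filter, Finset.mem_univ, true_and, Set.mem_setOf_eq] at hσ
        exact Finset.mem_filter.mpr ⟨Finset.mem_product.mpr ⟨Finset.mem_univ _, Finset.mem_univ _⟩,
          fun h => hij' (σ.injective h), hσ⟩)]
    rw [Finset.sum_congr rfl (fun ab hab => ?_), Finset.sum_const, smul_eq_mul]
    have hne : ab.1 ≠ ab.2 := (Finset.mem_filter.mp hab).2.1
    rw [← fib_eq ab hne]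
    congr 1
    ext σ
    simp only [Finset.mem_filter, Finset.mem_univ, true_and]
    constructor
    · rintro ⟨-, h⟩; exact h
    · intro h
      refine ⟨?_, h⟩
      have hbin := (Finset.mem_filter.mp hab).2.2
      have h1 : σ i = ab.1 := by rw [← h]
      have h2 : σ j = ab.2 := by rw [← h]
      rw [h1, h2]
      exact hbin
  -- total as sum over all fibers
  have htotal : Fintype.card (Equiv.Perm (Fin p)) = (p * p - p) * F := by
    rw [← Finset.card_univ]
    rw [Finset.card_eq_sum_card_fiberwise (f := g)
      (t := (univ ×ˢ univ : Finset (Fin p × Fin p)))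
      (fun σ _ => Finset.mem_product.mpr ⟨Finset.mem_univ _, Finset.mem_univ _⟩)]
    rw [← Finset.sum_filter_add_sum_filter_not _ (fun ab => ab.1 ≠ ab.2)]
    have hz : ∑ ab ∈ (univ ×ˢ univ : Finset (Fin p × Fin p)).filter (fun ab => ¬ ab.1 ≠ ab.2),
        (univ.filter fun σ : Equiv.Perm (Fin p) => g σ = ab).card = 0 := by
      apply Finset.sum_eq_zero
      intro ab hab
      exact fib_diag ab (not_not.mp (Finset.mem_filter.mp hab).2)
    rw [hz, add_zero]
    rw [Finset.sum_congr rfl (fun ab hab => fib_eq ab (Finset.mem_filter.mp hab).2),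
      Finset.sum_const, smul_eq_mul]
    congr 1
    have : (univ ×ˢ univ : Finset (Fin p × Fin p)).filter (fun ab => ab.1 ≠ ab.2)
        = (univ : Finset (Fin p)).offDiag := by
      ext ab; simp
    rw [this, Finset.offDiag_card, Finset.card_univ, Fintype.card_fin]
  rw [hcount, ht₁card, htotal]
  -- p*(m-1)*F*B ≤ (p*p-p)*F
  have key : p * (m - 1) * B ≤ p * p - p := by
    have h1 : (m - 1) * B ≤ p - 1 := by
      have : (m - 1) * B = m * B - B := by
        rw [Nat.sub_mul, one_mul]
      rw [this]
      have : m * B = p := by rw [hpm, Nat.mul_comm]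
      omega
    apply Nat.le_sub_of_add_le
    calc p * (m - 1) * B + p = p * ((m - 1) * B) + p * 1 := by ring
      _ = p * ((m - 1) * B + 1) := by ring
      _ ≤ p * p := by
          apply Nat.mul_le_mul_left
          omega
  calc p * (m - 1) * F * B = (p * (m - 1) * B) * F := by ring
    _ ≤ (p * p - p) * F := Nat.mul_le_mul_right F key

lemma sum_Ncol_le {p B m k : ℕ} (hm : 0 < m) (hB : 0 < B) (hpm : p = B * m)
    (S : Finset (Fin p)) (hS : S.card = k) :
    (∑ σ : Equiv.Perm (Fin p),
        (S.filter (fun i => ∃ j ∈ S, j ≠ i ∧ (σ j : ℕ) / m = (σ i : ℕ) / m)).card) * B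
      ≤ k * k * Fintype.card (Equiv.Perm (Fin p)) := by
  classical
  set G := Fintype.card (Equiv.Perm (Fin p)) with hG
  have step1 : ∀ σ : Equiv.Perm (Fin p),
      (S.filter (fun i => ∃ j ∈ S, j ≠ i ∧ (σ j : ℕ) / m = (σ i : ℕ) / m)).card
        ≤ ∑ i ∈ S, (S.filter fun j => j ≠ i ∧ (σ j : ℕ) / m = (σ i : ℕ) / m).card := by
    intro σ
    rw [Finset.card_filter]
    refine Finset.sum_le_sum fun i _ => ?_
    split_ifs with h
    · obtain ⟨j, hjS, hji, hbin⟩ := h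
      exact Finset.card_pos.mpr ⟨j, Finset.mem_filter.mpr ⟨hjS, hji, hbin⟩⟩
    · exact Nat.zero_le _
  have step2 : (∑ σ : Equiv.Perm (Fin p),
      (S.filter (fun i => ∃ j ∈ S, j ≠ i ∧ (σ j : ℕ) / m = (σ i : ℕ) / m)).card)
      ≤ ∑ i ∈ S, ∑ j ∈ S,
          (univ.filter fun σ : Equiv.Perm (Fin p) =>
            j ≠ i ∧ (σ j : ℕ) / m = (σ i : ℕ) / m).card := by
    calc _ ≤ ∑ σ : Equiv.Perm (Fin p), ∑ i ∈ S,
            (S.filter fun j => j ≠ i ∧ (σ j : ℕ) / m = (σ i : ℕ) / m).card :=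
          Finset.sum_le_sum fun σ _ => step1 σ
      _ = ∑ i ∈ S, ∑ σ : Equiv.Perm (Fin p),
            (S.filter fun j => j ≠ i ∧ (σ j : ℕ) / m = (σ i : ℕ) / m).card :=
          Finset.sum_comm
      _ = ∑ i ∈ S, ∑ σ : Equiv.Perm (Fin p), ∑ j ∈ S,
            (if j ≠ i ∧ (σ j : ℕ) / m = (σ i : ℕ) / m then 1 else 0) := by
          refine Finset.sum_congr rfl fun i _ => Finset.sum_congr rfl fun σ _ => ?_
          rw [Finset.card_filter]
      _ = ∑ i ∈ S, ∑ j ∈ S, ∑ σ : Equiv.Perm (Fin p),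
            (if j ≠ i ∧ (σ j : ℕ) / m = (σ i : ℕ) / m then 1 else 0) := by
          refine Finset.sum_congr rfl fun i _ => ?_
          exact Finset.sum_comm
      _ = ∑ i ∈ S, ∑ j ∈ S,
            (univ.filter fun σ : Equiv.Perm (Fin p) =>
              j ≠ i ∧ (σ j : ℕ) / m = (σ i : ℕ) / m).card := by
          refine Finset.sum_congr rfl fun i _ => Finset.sum_congr rfl fun j _ => ?_
          rw [Finset.card_filter]
  have step3 : ∀ i j : Fin p,
      (univ.filter fun σ : Equiv.Perm (Fin p) =>
        j ≠ i ∧ (σ j : ℕ) / m = (σ i : ℕ) / m).card * B ≤ G := by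
    intro i j
    by_cases hji : j = i
    · have : (univ.filter fun σ : Equiv.Perm (Fin p) =>
          j ≠ i ∧ (σ j : ℕ) / m = (σ i : ℕ) / m) = ∅ := by
        rw [Finset.filter_eq_empty_iff]
        intro σ _ h
        exact h.1 hji
      rw [this]
      simp
    · have heq : (univ.filter fun σ : Equiv.Perm (Fin p) =>
          j ≠ i ∧ (σ j : ℕ) / m = (σ i : ℕ) / m)
          = (univ.filter fun σ : Equiv.Perm (Fin p) => (σ j : ℕ) / m = (σ i : ℕ) / m) := by
        apply Finset.filter_congr
        intro σ _
        simp [hji]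
      rw [heq]
      exact count_mul_B_le hm hB hpm hji
  calc (∑ σ : Equiv.Perm (Fin p),
        (S.filter (fun i => ∃ j ∈ S, j ≠ i ∧ (σ j : ℕ) / m = (σ i : ℕ) / m)).card) * B
      ≤ (∑ i ∈ S, ∑ j ∈ S,
          (univ.filter fun σ : Equiv.Perm (Fin p) =>
            j ≠ i ∧ (σ j : ℕ) / m = (σ i : ℕ) / m).card) * B :=
        Nat.mul_le_mul_right B step2
    _ = ∑ i ∈ S, ∑ j ∈ S,
          ((univ.filter fun σ : Equiv.Perm (Fin p) =>
            j ≠ i ∧ (σ j : ℕ) / m = (σ i : ℕ) / m).card * B) := by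
        rw [Finset.sum_mul]
        exact Finset.sum_congr rfl fun i _ => Finset.sum_mul ..
    _ ≤ ∑ i ∈ S, ∑ j ∈ S, G :=
        Finset.sum_le_sum fun i _ => Finset.sum_le_sum fun j _ => step3 i j
    _ = k * k * G := by
        simp [Finset.sum_const, hS]
        ring

/-- Under a uniformly random permutation `σ` of `Fin p` (uniform partition of `p` items into
`B` equal bins, item `i` assigned to bin `σ i / (p/B)`), if `B ≥ k^(1+ε)` then for a fixed
set `S` of `k` defectives and any `α > 0`, the number `N_col` of collided defectives
satisfies `P[N_col ≥ (α/3)·k] ≤ (3/α)·k^(−ε)`. -/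
theorem random_binning_collision_count_markov
    (p B k : ℕ) (hp : 0 < p) (hB : 0 < B) (hk : 0 < k) (hdvd : B ∣ p)
    (ε : ℝ) (hε : 0 < ε) (hBk : (k : ℝ) ^ ((1 : ℝ) + ε) ≤ (B : ℝ))
    (S : Finset (Fin p)) (hS : S.card = k)
    (α : ℝ) (hα : 0 < α) :
    (PMF.uniformOfFintype (Equiv.Perm (Fin p))).toOuterMeasure
        {σ : Equiv.Perm (Fin p) |
          (α / 3) * (k : ℝ) ≤
            ((S.filter (fun i =>
                ∃ j ∈ S, j ≠ i ∧ (σ j : ℕ) / (p / B) = (σ i : ℕ) / (p / B))).card : ℝ)}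
      ≤ ENNReal.ofReal ((3 / α) * (k : ℝ) ^ (-ε)) := by
  classical
  set m := p / B with hm
  have hpm : p = B * m := (Nat.mul_div_cancel' hdvd).symm
  have hm0 : 0 < m := by
    rcases Nat.eq_zero_or_pos m with h | h
    · rw [h, Nat.mul_zero] at hpm; omega
    · exact h
  set G := Fintype.card (Equiv.Perm (Fin p)) with hG
  have hG0 : 0 < G := Fintype.card_pos
  set N : Equiv.Perm (Fin p) → ℕ := fun σ =>
    (S.filter (fun i => ∃ j ∈ S, j ≠ i ∧ (σ j : ℕ) / m = (σ i : ℕ) / m)).card with hN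
  have hT : (∑ σ : Equiv.Perm (Fin p), N σ) * B ≤ k * k * G := sum_Ncol_le hm0 hB hpm S hS
  set Ev := univ.filter (fun σ : Equiv.Perm (Fin p) => (α / 3) * (k : ℝ) ≤ (N σ : ℝ)) with hEv
  -- Markov step
  have hEvcard : (Ev.card : ℝ) * ((α / 3) * (k : ℝ)) ≤ ((∑ σ : Equiv.Perm (Fin p), N σ : ℕ) : ℝ) := by
    push_cast
    calc (Ev.card : ℝ) * ((α / 3) * (k : ℝ)) = Ev.card • ((α / 3) * (k : ℝ)) := by
          rw [nsmul_eq_mul]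
      _ ≤ ∑ σ ∈ Ev, (N σ : ℝ) :=
          Finset.card_nsmul_le_sum Ev _ _ (fun σ hσ => (Finset.mem_filter.mp hσ).2)
      _ ≤ ∑ σ : Equiv.Perm (Fin p), (N σ : ℝ) :=
          Finset.sum_le_sum_of_subset_of_nonneg (Finset.filter_subset _ _)
            (fun σ _ _ => by exact Nat.cast_nonneg _)
  -- real bound on Ev.card
  have hk0 : (0:ℝ) < k := by exact_mod_cast hk
  have hB0 : (0:ℝ) < B := by exact_mod_cast hB
  have hrpow_pos : (0:ℝ) < (k:ℝ) ^ ((1:ℝ) - ε) := Real.rpow_pos_of_pos hk0 _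
  have hkk : (k:ℝ) * (k:ℝ) ≤ (B:ℝ) * ((k:ℝ) ^ ((1:ℝ) - ε)) := by
    have h1 : (k:ℝ) ^ ((1:ℝ) + ε) * (k:ℝ) ^ ((1:ℝ) - ε) = (k:ℝ) * (k:ℝ) := by
      rw [← Real.rpow_add hk0]
      have : (1:ℝ) + ε + (1 - ε) = 2 := by ring
      rw [this]
      rw [show ((2:ℝ) = ((2:ℕ):ℝ)) by norm_num, Real.rpow_natCast]
      ring
    calc (k:ℝ) * (k:ℝ) = (k:ℝ) ^ ((1:ℝ) + ε) * (k:ℝ) ^ ((1:ℝ) - ε) := h1.symm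
      _ ≤ (B:ℝ) * ((k:ℝ) ^ ((1:ℝ) - ε)) := mul_le_mul_of_nonneg_right hBk hrpow_pos.le
  have hsplit : (k:ℝ) ^ ((1:ℝ) - ε) = (k:ℝ) * (k:ℝ) ^ (-ε) := by
    rw [show (1:ℝ) - ε = 1 + (-ε) by ring, Real.rpow_add hk0, Real.rpow_one]
  have hreal : (Ev.card : ℝ) ≤ (3 / α) * (k:ℝ) ^ (-ε) * (G:ℝ) := by
    have hTc : ((∑ σ : Equiv.Perm (Fin p), N σ : ℕ) : ℝ) * (B:ℝ) ≤ (k:ℝ) * (k:ℝ) * (G:ℝ) := by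
      exact_mod_cast hT
    have hG0' : (0:ℝ) ≤ (G:ℝ) := by positivity
    have h5 : (Ev.card : ℝ) * ((α / 3) * (k:ℝ)) * (B:ℝ) ≤ (B:ℝ) * ((k:ℝ) * (k:ℝ)^(-ε)) * (G:ℝ) := by
      calc (Ev.card : ℝ) * ((α / 3) * (k:ℝ)) * (B:ℝ)
          ≤ ((∑ σ : Equiv.Perm (Fin p), N σ : ℕ) : ℝ) * (B:ℝ) :=
            mul_le_mul_of_nonneg_right hEvcard hB0.le
        _ ≤ (k:ℝ) * (k:ℝ) * (G:ℝ) := hTc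
        _ ≤ (B:ℝ) * ((k:ℝ) ^ ((1:ℝ) - ε)) * (G:ℝ) := mul_le_mul_of_nonneg_right hkk hG0'
        _ = (B:ℝ) * ((k:ℝ) * (k:ℝ)^(-ε)) * (G:ℝ) := by rw [hsplit]
    have h6 : (Ev.card : ℝ) * ((α / 3) * (k:ℝ)) ≤ (k:ℝ) * (k:ℝ)^(-ε) * (G:ℝ) := by
      have := le_of_mul_le_mul_right (by linarith [h5] :
        (Ev.card : ℝ) * ((α / 3) * (k:ℝ)) * (B:ℝ) ≤ ((k:ℝ) * (k:ℝ)^(-ε) * (G:ℝ)) * (B:ℝ)) hB0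
      exact this
    have hc : (0:ℝ) < (α / 3) * (k:ℝ) := by positivity
    rw [← le_div_iff₀ hc] at h6
    calc (Ev.card : ℝ) ≤ (k:ℝ) * (k:ℝ)^(-ε) * (G:ℝ) / ((α / 3) * (k:ℝ)) := h6
      _ = (3 / α) * (k:ℝ) ^ (-ε) * (G:ℝ) := by
          field_simp
  -- compute the measure
  have hmeas : (PMF.uniformOfFintype (Equiv.Perm (Fin p))).toOuterMeasure
        {σ : Equiv.Perm (Fin p) | (α / 3) * (k : ℝ) ≤ (N σ : ℝ)}
      = (Ev.card : ℝ≥0∞) * ((G : ℝ≥0∞))⁻¹ := by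
    rw [PMF.toOuterMeasure_apply, tsum_fintype]
    have : ∀ σ : Equiv.Perm (Fin p),
        Set.indicator {σ : Equiv.Perm (Fin p) | (α / 3) * (k : ℝ) ≤ (N σ : ℝ)}
          (⇑(PMF.uniformOfFintype (Equiv.Perm (Fin p)))) σ
        = if (α / 3) * (k : ℝ) ≤ (N σ : ℝ) then ((G : ℝ≥0∞))⁻¹ else 0 := by
      intro σ
      rw [Set.indicator_apply]
      simp only [Set.mem_setOf_eq, PMF.uniformOfFintype_apply, hG]
    rw [Finset.sum_congr rfl (fun σ _ => this σ)]
    rw [← Finset.sum_filter, ← hEv, Finset.sum_const, nsmul_eq_mul]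
  show (PMF.uniformOfFintype (Equiv.Perm (Fin p))).toOuterMeasure
        {σ : Equiv.Perm (Fin p) | (α / 3) * (k : ℝ) ≤ (N σ : ℝ)}
      ≤ ENNReal.ofReal ((3 / α) * (k : ℝ) ^ (-ε))
  rw [hmeas]
  have hGne : (G : ℝ≥0∞) ≠ 0 := Nat.cast_ne_zero.mpr hG0.ne'
  have hGtop : (G : ℝ≥0∞) ≠ ⊤ := ENNReal.natCast_ne_top G
  have h6 : (Ev.card : ℝ≥0∞) ≤ ENNReal.ofReal ((3 / α) * (k:ℝ) ^ (-ε)) * (G : ℝ≥0∞) := by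
    rw [show ((Ev.card : ℝ≥0∞)) = ENNReal.ofReal ((Ev.card : ℝ)) from (ENNReal.ofReal_natCast _).symm,
        show ((G : ℝ≥0∞)) = ENNReal.ofReal ((G : ℝ)) from (ENNReal.ofReal_natCast _).symm,
        ← ENNReal.ofReal_mul (by positivity)]
    exact ENNReal.ofReal_le_ofReal hreal
  calc (Ev.card : ℝ≥0∞) * ((G : ℝ≥0∞))⁻¹
      ≤ (ENNReal.ofReal ((3 / α) * (k:ℝ) ^ (-ε)) * (G : ℝ≥0∞)) * ((G : ℝ≥0∞))⁻¹ :=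
        mul_le_mul_left h6 _
    _ = ENNReal.ofReal ((3 / α) * (k:ℝ) ^ (-ε)) := by
        rw [mul_assoc, ENNReal.mul_inv_cancel hGne hGtop, mul_one]
end

section
/- Let I be a finite set of items, S ⊆ I the set of defectives, B a positive integer, and bin : I → Fin B an assignment of items to bins. Let B* = {b : ∃ s ∈ S, bin(s) = b} be the set of bins containing a defective, C = {i ∈ S : ∃ j ∈ S, j ≠ i, bin(j) = bin(i)} the collided defectives, and M = {b : bin b contains at least two elements of S} the multi-defective bins. Let 𝓑 ⊆ Fin B be a set of declared bins and E ⊆ Fin B a set of error bins, and suppose the estimate Ŝ ⊆ I satisfies: (i) for every b ∉ 𝓑, no element of Ŝ is assigned to bin b; (ii) for every b ∈ Fin B, at most one element of Ŝ is assigned to bin b; (iii) for every b ∈ 𝓑 \ E such that exactly one element of S is assigned to bin b, the elements of Ŝ assigned to bin b coincide exactly with the elements of S assigned to bin b. Then |S \ Ŝ| ≤ |C| + |B* \ 𝓑| + |E| and |Ŝ \ S| ≤ |M| + |𝓑 \ B*| + |E|. -/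
/-- Deterministic error accounting for the inner two-stage algorithm. With defective set
`S ⊆ I`, bins assigned by `bin`, declared bins `Bdecl`, decoding-error bins `E`, and an
estimate `Shat ⊆ I` that (i) contains no item from an undeclared bin, (ii) contains at most
one item per bin, and (iii) on every declared, error-free bin containing exactly one
defective, coincides there with the defectives; the false negatives are at most
(collided defectives) + (missed defective bins) + (error bins), and the false positives
are at most (multi-defective bins) + (falsely declared bins) + (error bins). -/
theorem inner_algorithm_error_accounting
    {ι : Type*} [DecidableEq ι] (I : Finset ι) (S : Finset ι) (hSI : S ⊆ I)
    (B : ℕ) (hB : 0 < B) (bin : ι → Fin B)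
    (Bdecl E : Finset (Fin B)) (Shat : Finset ι) (hShatI : Shat ⊆ I)
    (h1 : ∀ b : Fin B, b ∉ Bdecl → ∀ i ∈ Shat, bin i ≠ b)
    (h2 : ∀ b : Fin B, (Shat.filter (fun i => bin i = b)).card ≤ 1)
    (h3 : ∀ b ∈ Bdecl \ E, (S.filter (fun i => bin i = b)).card = 1 →
        Shat.filter (fun i => bin i = b) = S.filter (fun i => bin i = b)) :
    (S \ Shat).card
        ≤ (S.filter (fun i => ∃ j ∈ S, j ≠ i ∧ bin j = bin i)).card
          + ((S.image bin) \ Bdecl).card + E.card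
    ∧ (Shat \ S).card
        ≤ (Finset.univ.filter (fun b : Fin B =>
              1 < (S.filter (fun i => bin i = b)).card)).card
          + (Bdecl \ (S.image bin)).card + E.card := by
  classical
  constructor
  · -- false negatives
    have hsplit : (S \ Shat).card =
        ((S \ Shat).filter (fun i => ∃ j ∈ S, j ≠ i ∧ bin j = bin i)).card
        + ((S \ Shat).filter (fun i => ¬ ∃ j ∈ S, j ≠ i ∧ bin j = bin i)).card :=
      (Finset.card_filter_add_card_filter_not _).symm
    have h4 : ((S \ Shat).filter (fun i => ∃ j ∈ S, j ≠ i ∧ bin j = bin i)).card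
        ≤ (S.filter (fun i => ∃ j ∈ S, j ≠ i ∧ bin j = bin i)).card := by
      exact Finset.card_le_card (Finset.filter_subset_filter _ Finset.sdiff_subset)
    have h5 : ((S \ Shat).filter (fun i => ¬ ∃ j ∈ S, j ≠ i ∧ bin j = bin i)).card
        ≤ (((S.image bin) \ Bdecl) ∪ E).card := by
      apply Finset.card_le_card_of_injOn bin
      · intro i hi
        simp only [Finset.mem_coe, Finset.mem_filter, Finset.mem_sdiff] at hi
        obtain ⟨⟨hiS, hiShat⟩, hnc⟩ := hi
        have hfilt : S.filter (fun x => bin x = bin i) = {i} := by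
          ext x
          simp only [Finset.mem_filter, Finset.mem_singleton]
          constructor
          · rintro ⟨hxS, hx⟩
            by_contra hne
            exact hnc ⟨x, hxS, hne, hx⟩
          · rintro rfl; exact ⟨hiS, rfl⟩
        by_cases hb : bin i ∈ Bdecl
        · by_cases he : bin i ∈ E
          · exact Finset.mem_union_right _ he
          · exfalso
            have := h3 (bin i) (Finset.mem_sdiff.2 ⟨hb, he⟩) (by rw [hfilt]; simp)
            rw [hfilt] at this
            have : i ∈ Shat.filter (fun x => bin x = bin i) := by
              rw [this]; simp
            exact hiShat (Finset.mem_filter.1 this).1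
        · exact Finset.mem_union_left _ (Finset.mem_sdiff.2
            ⟨Finset.mem_image_of_mem bin hiS, hb⟩)
      · intro i hi j hj hij
        simp only [Finset.coe_filter, Set.mem_setOf_eq, Finset.mem_sdiff] at hi hj
        by_contra hne
        exact hi.2 ⟨j, hj.1.1, fun h => hne h.symm, hij.symm⟩
    calc (S \ Shat).card ≤ _ := hsplit.le
      _ ≤ (S.filter (fun i => ∃ j ∈ S, j ≠ i ∧ bin j = bin i)).card
          + (((S.image bin) \ Bdecl) ∪ E).card := add_le_add h4 h5
      _ ≤ _ := by
          rw [add_assoc]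
          exact add_le_add_right (Finset.card_union_le _ _) _
  · -- false positives
    have h5 : (Shat \ S).card ≤
        ((Finset.univ.filter (fun b : Fin B =>
            1 < (S.filter (fun i => bin i = b)).card))
          ∪ (Bdecl \ (S.image bin)) ∪ E).card := by
      apply Finset.card_le_card_of_injOn bin
      · intro i hi
        simp only [Finset.mem_coe, Finset.mem_sdiff] at hi
        obtain ⟨hiShat, hiS⟩ := hi
        have hb : bin i ∈ Bdecl := by
          by_contra hb
          exact h1 (bin i) hb i hiShat rfl
        by_cases him : bin i ∈ S.image bin
        · have hpos : 0 < (S.filter (fun x => bin x = bin i)).card := by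
            obtain ⟨j, hjS, hj⟩ := Finset.mem_image.1 him
            exact Finset.card_pos.2 ⟨j, Finset.mem_filter.2 ⟨hjS, hj⟩⟩
          rcases lt_or_ge 1 (S.filter (fun x => bin x = bin i)).card with hgt | hle
          · exact Finset.mem_union_left _ (Finset.mem_union_left _
              (Finset.mem_filter.2 ⟨Finset.mem_univ _, hgt⟩))
          · have hone : (S.filter (fun x => bin x = bin i)).card = 1 :=
              le_antisymm hle hpos
            by_cases he : bin i ∈ E
            · exact Finset.mem_union_right _ he
            · exfalso
              have := h3 (bin i) (Finset.mem_sdiff.2 ⟨hb, he⟩) hone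
              have hmem : i ∈ Shat.filter (fun x => bin x = bin i) :=
                Finset.mem_filter.2 ⟨hiShat, rfl⟩
              rw [this] at hmem
              exact hiS (Finset.mem_filter.1 hmem).1
        · exact Finset.mem_union_left _ (Finset.mem_union_right _
            (Finset.mem_sdiff.2 ⟨hb, him⟩))
      · intro i hi j hj hij
        simp only [Finset.coe_sdiff, Set.mem_diff, Finset.mem_coe] at hi hj
        have hi' : i ∈ Shat.filter (fun x => bin x = bin j) :=
          Finset.mem_filter.2 ⟨hi.1, hij⟩
        have hj' : j ∈ Shat.filter (fun x => bin x = bin j) :=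
          Finset.mem_filter.2 ⟨hj.1, rfl⟩
        have := Finset.card_le_one.1 (h2 (bin j))
        exact this i hi' j hj'
    calc (Shat \ S).card ≤ _ := h5
      _ ≤ ((Finset.univ.filter (fun b : Fin B =>
            1 < (S.filter (fun i => bin i = b)).card))
          ∪ (Bdecl \ (S.image bin))).card + E.card := Finset.card_union_le _ _
      _ ≤ _ := add_le_add_left (Finset.card_union_le _ _) _
end
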